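/- arXiv:1610.01560 — 3 statements merged into one kernel-verified Lean document; each statement's English description precedes it below -/
import Mathlib

section
/- If the incidence graph between a finite set P of m points and a finite set C of n curves contains no complete bipartite subgraph K_{k,μ+1} (i.e., no k points all lying on μ+1 common curves), then the number of incidences I(P,C) is at most c·(m·n^{1-1/k} + n) for a constant c depending only on k and μ. -/
open Finset

/-- pointwise: `(d - (k-1))^k ≤ d.descFactorial k`. -/
lemma aux_pow_le_descFactorial (d k : ℕ) : (d - (k - 1)) ^ k ≤ d.descFactorial k := by
  rw [Nat.descFactorial_eq_prod_range]
  calc (d - (k-1)) ^ k = ∏ _i ∈ Finset.range k, (d - (k-1)) := by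
        rw [Finset.prod_const, Finset.card_range]
    _ ≤ ∏ i ∈ Finset.range k, (d - i) :=
        Finset.prod_le_prod' fun i hi =>
          Nat.sub_le_sub_left (by have := Finset.mem_range.1 hi; omega) d

/-- Kővári–Sós–Turán incidence bound: if no `k` points lie on `μ+1` common curves,
then the number of incidences is at most `c·(m·n^{1-1/k} + n)` for a constant `c`
depending only on `k` and `μ`. -/
theorem stmt0 (k μ : ℕ) (hk : 1 ≤ k) :
    ∃ c : ℝ, 0 < c ∧
      ∀ (m n : ℕ) (Inc : Fin m → Fin n → Prop)
        [DecidablePred fun pc : Fin m × Fin n => Inc pc.1 pc.2]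
        [∀ p, DecidablePred (Inc p)],
        (∀ s : Finset (Fin m), s.card = k →
          (Finset.univ.filter (fun γ : Fin n => ∀ p ∈ s, Inc p γ)).card ≤ μ) →
        ((Finset.univ.filter (fun pc : Fin m × Fin n => Inc pc.1 pc.2)).card : ℝ)
          ≤ c * ((m : ℝ) * (n : ℝ) ^ (1 - 1 / (k : ℝ)) + (n : ℝ)) := by
  refine ⟨(μ : ℝ) + k + 1, by positivity, ?_⟩
  intro m n Inc _ _ hμ
  rcases Nat.eq_zero_or_pos n with hn | hn
  · subst hn
    have h0 : (Finset.univ.filter (fun pc : Fin m × Fin 0 => Inc pc.1 pc.2)).card = 0 :=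
      Nat.le_zero.1 ((Finset.card_filter_le _ _).trans (by simp))
    rw [h0]
    have h1 : (0:ℝ) ≤ ((0:ℕ):ℝ) ^ (1 - 1/(k:ℝ)) := Real.rpow_nonneg (by norm_num) _
    push_cast at h1 ⊢
    have h2 : (0:ℝ) ≤ (m:ℝ) * (0:ℝ) ^ (1 - 1/(k:ℝ)) + 0 := by
      have := mul_nonneg (Nat.cast_nonneg (α := ℝ) m) h1
      simpa using this
    exact mul_nonneg (by positivity) h2
  -- degrees
  set d : Fin n → ℕ := fun γ => (Finset.univ.filter (fun p => Inc p γ)).card with hd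
  -- incidence count as sum of degrees
  have he : (Finset.univ.filter (fun pc : Fin m × Fin n => Inc pc.1 pc.2)).card
      = ∑ γ : Fin n, d γ := by
    rw [Finset.card_filter, Fintype.sum_prod_type, Finset.sum_comm]
    exact Finset.sum_congr rfl fun γ _ => (Finset.card_filter _ _).symm
  -- double counting
  have hdc : ∑ γ : Fin n, (d γ).choose k ≤ μ * m.choose k := by
    have key : ∀ γ : Fin n, (d γ).choose k
        = ((Finset.univ.powersetCard k).filter (fun S => ∀ p ∈ S, Inc p γ)).card := by
      intro γ
      rw [← Finset.card_powersetCard]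
      congr 1
      ext S
      simp only [Finset.mem_powersetCard, Finset.mem_filter, Finset.subset_univ, true_and,
        Finset.subset_iff, Finset.mem_filter, Finset.mem_univ, true_and, hd]
      tauto
    calc ∑ γ : Fin n, (d γ).choose k
        = ∑ γ : Fin n, ((Finset.univ.powersetCard k).filter (fun S => ∀ p ∈ S, Inc p γ)).card := by
          simp_rw [key]
      _ = ∑ S ∈ Finset.univ.powersetCard k,
            (Finset.univ.filter (fun γ : Fin n => ∀ p ∈ S, Inc p γ)).card := by
          simp_rw [Finset.card_filter]
          rw [Finset.sum_comm]
      _ ≤ ∑ S ∈ Finset.univ.powersetCard k, μ :=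
          Finset.sum_le_sum fun S hS => hμ S (Finset.mem_powersetCard.1 hS).2
      _ = μ * m.choose k := by
          rw [Finset.sum_const, Finset.card_powersetCard, Finset.card_univ, Fintype.card_fin,
            smul_eq_mul, mul_comm]
  -- natural-number moment bound
  have hmom : ∑ γ : Fin n, (d γ - (k-1)) ^ k ≤ μ * m ^ k := by
    calc ∑ γ : Fin n, (d γ - (k-1)) ^ k
        ≤ ∑ γ : Fin n, (d γ).descFactorial k :=
          Finset.sum_le_sum fun γ _ => aux_pow_le_descFactorial _ _
      _ = Nat.factorial k * ∑ γ : Fin n, (d γ).choose k := by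
          rw [Finset.mul_sum]; simp_rw [Nat.descFactorial_eq_factorial_mul_choose]
      _ ≤ Nat.factorial k * (μ * m.choose k) := Nat.mul_le_mul_left _ hdc
      _ = μ * (Nat.factorial k * m.choose k) := by ring
      _ = μ * m.descFactorial k := by rw [Nat.descFactorial_eq_factorial_mul_choose]
      _ ≤ μ * m ^ k := Nat.mul_le_mul_left _ (Nat.descFactorial_le_pow _ _)
  -- real side
  set x : Fin n → ℝ := fun γ => ((d γ - (k-1) : ℕ) : ℝ) with hx
  have hx0 : ∀ γ ∈ Finset.univ, (0:ℝ) ≤ x γ := fun γ _ => Nat.cast_nonneg _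
  have hS0 : (0:ℝ) ≤ ∑ γ, x γ := Finset.sum_nonneg hx0
  have hxk : ∑ γ : Fin n, (x γ) ^ k ≤ (μ : ℝ) * (m:ℝ) ^ k := by
    calc ∑ γ : Fin n, (x γ) ^ k = ((∑ γ : Fin n, (d γ - (k-1)) ^ k : ℕ) : ℝ) := by
          push_cast; rfl
      _ ≤ ((μ * m ^ k : ℕ) : ℝ) := Nat.cast_le.2 hmom
      _ = (μ : ℝ) * (m:ℝ) ^ k := by push_cast; ring
  -- power mean
  have hpm : (∑ γ, x γ) ^ k ≤ (n:ℝ) ^ (k-1) * ∑ γ : Fin n, (x γ) ^ k := by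
    obtain ⟨k', rfl⟩ : ∃ k', k = k' + 1 := ⟨k - 1, by omega⟩
    have hpow := pow_sum_div_card_le_sum_pow (s := Finset.univ) (f := x) hx0 k'
    rw [Finset.card_univ, Fintype.card_fin] at hpow
    have hnpos : (0:ℝ) < (n:ℝ) ^ k' := by positivity
    rw [div_le_iff₀ hnpos] at hpow
    simpa [mul_comm] using hpow
  -- exponent algebra
  have hk0 : (k:ℝ) ≠ 0 := by positivity
  have hck : ((k-1:ℕ):ℝ) = (k:ℝ) - 1 := by
    have := Nat.cast_sub hk (R := ℝ); simpa using this
  have hrpow : ((n:ℝ) ^ (1 - 1/(k:ℝ))) ^ k = (n:ℝ) ^ (k-1) := by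
    rw [← Real.rpow_natCast ((n:ℝ) ^ (1 - 1/(k:ℝ))) k, ← Real.rpow_mul (Nat.cast_nonneg n)]
    have h2 : (1 - 1/(k:ℝ)) * k = ((k-1 : ℕ) : ℝ) := by rw [hck]; field_simp
    rw [h2, Real.rpow_natCast]
  set B : ℝ := ((μ:ℝ)+1) * m * (n:ℝ) ^ (1 - 1/(k:ℝ)) with hB
  have hr0 : (0:ℝ) ≤ (n:ℝ) ^ (1 - 1/(k:ℝ)) := Real.rpow_nonneg (Nat.cast_nonneg n) _
  have hB0 : 0 ≤ B := by positivity
  have hSB : (∑ γ, x γ) ≤ B := by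
    refine le_of_pow_le_pow_left₀ (by omega : k ≠ 0) hB0 ?_
    calc (∑ γ, x γ) ^ k ≤ (n:ℝ) ^ (k-1) * ∑ γ : Fin n, (x γ) ^ k := hpm
      _ ≤ (n:ℝ) ^ (k-1) * ((μ : ℝ) * (m:ℝ) ^ k) :=
          mul_le_mul_of_nonneg_left hxk (by positivity)
      _ ≤ B ^ k := by
          rw [hB, mul_pow, mul_pow, hrpow]
          have h1a : (1:ℝ) ≤ (μ:ℝ)+1 := by
            have := Nat.cast_nonneg (α := ℝ) μ; linarith
          have h1 : (μ:ℝ) ≤ ((μ:ℝ)+1) ^ k :=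
            le_trans (by linarith) (le_self_pow₀ h1a (by omega))
          have h2 : (μ:ℝ) * ((m:ℝ) ^ k * (n:ℝ) ^ (k-1))
              ≤ ((μ:ℝ)+1) ^ k * ((m:ℝ) ^ k * (n:ℝ) ^ (k-1)) :=
            mul_le_mul_of_nonneg_right h1 (by positivity)
          ring_nf at h2 ⊢
          linarith [h2]
  -- e ≤ S + (k-1) n
  have heS : ((Finset.univ.filter (fun pc : Fin m × Fin n => Inc pc.1 pc.2)).card : ℝ)
      ≤ (∑ γ, x γ) + ((k-1 : ℕ):ℝ) * n := by
    have hnat : ∑ γ : Fin n, d γ ≤ (∑ γ : Fin n, (d γ - (k-1))) + (k-1) * n := by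
      calc ∑ γ : Fin n, d γ ≤ ∑ γ : Fin n, ((d γ - (k-1)) + (k-1)) :=
            Finset.sum_le_sum fun γ _ => le_tsub_add
        _ = (∑ γ : Fin n, (d γ - (k-1))) + (k-1) * n := by
            rw [Finset.sum_add_distrib, Finset.sum_const, Finset.card_univ, Fintype.card_fin,
              smul_eq_mul, mul_comm]
    rw [he, hx]
    beta_reduce; exact_mod_cast hnat
  calc ((Finset.univ.filter (fun pc : Fin m × Fin n => Inc pc.1 pc.2)).card : ℝ)
      ≤ (∑ γ, x γ) + ((k-1:ℕ):ℝ) * n := heS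
    _ ≤ B + ((k-1:ℕ):ℝ) * n := by linarith
    _ ≤ ((μ : ℝ) + k + 1) * ((m : ℝ) * (n : ℝ) ^ (1 - 1 / (k : ℝ)) + (n : ℝ)) := by
        rw [hB, hck]
        have hm0 : (0:ℝ) ≤ (m:ℝ) := Nat.cast_nonneg m
        have hn0 : (0:ℝ) ≤ (n:ℝ) := Nat.cast_nonneg n
        have hk1 : (1:ℝ) ≤ (k:ℝ) := by exact_mod_cast hk
        nlinarith [mul_nonneg hm0 hr0, mul_nonneg (mul_nonneg hm0 hr0) (by linarith : (0:ℝ) ≤ (k:ℝ))]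
end

section
/- Let P₁ and P₂ be finite sets in ℝ³ and consider the unit spheres centered at the points of P₂. The incidence graph between P₁ and these unit spheres contains no K_{3,3}: no three points lie on three common unit spheres. -/
open scoped RealInnerProductSpace

private lemma quad_aux {E : Type*} [NormedAddCommGroup E] [InnerProductSpace ℝ E]
    (u v : E) (hu : u ≠ 0) (a b c : ℝ) (hab : a ≠ b) (hac : a ≠ c) (hbc : b ≠ c)
    (h1 : ‖v + a • u‖ = ‖v + b • u‖) (h2 : ‖v + a • u‖ = ‖v + c • u‖) : False := by
  have e : ∀ s : ℝ, ‖v + s • u‖ ^ 2 = ‖v‖ ^ 2 + 2 * s * ⟪v, u⟫ + s ^ 2 * ‖u‖ ^ 2 := by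
    intro s
    rw [norm_add_sq_real, real_inner_smul_right, norm_smul]
    simp [mul_pow, sq_abs]
    ring
  have h1sq : ‖v + a • u‖ ^ 2 = ‖v + b • u‖ ^ 2 := by rw [h1]
  have h2sq : ‖v + a • u‖ ^ 2 = ‖v + c • u‖ ^ 2 := by rw [h2]
  have d1 : (a - b) * (2 * ⟪v, u⟫ + (a + b) * ‖u‖ ^ 2) = 0 := by
    linear_combination h1sq - e a + e b
  have d2 : (a - c) * (2 * ⟪v, u⟫ + (a + c) * ‖u‖ ^ 2) = 0 := by
    linear_combination h2sq - e a + e c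
  have e1 : 2 * ⟪v, u⟫ + (a + b) * ‖u‖ ^ 2 = 0 :=
    (mul_eq_zero.1 d1).resolve_left (sub_ne_zero.2 hab)
  have e2 : 2 * ⟪v, u⟫ + (a + c) * ‖u‖ ^ 2 = 0 :=
    (mul_eq_zero.1 d2).resolve_left (sub_ne_zero.2 hac)
  have hn : ‖u‖ ^ 2 ≠ 0 := pow_ne_zero _ (norm_ne_zero_iff.2 hu)
  have : (b - c) * ‖u‖ ^ 2 = 0 := by linear_combination e1 - e2
  rcases mul_eq_zero.1 this with h | h
  · exact hbc (sub_eq_zero.1 h)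
  · exact hn h

private lemma ortho_aux {E : Type*} [NormedAddCommGroup E] [InnerProductSpace ℝ E]
    (p p' q q' : E) (h11 : dist p q = 1) (h12 : dist p q' = 1)
    (h21 : dist p' q = 1) (h22 : dist p' q' = 1) : ⟪p - p', q - q'⟫ = 0 := by
  have ex : ∀ x y : E, dist x y = 1 → ‖x‖ ^ 2 - 2 * ⟪x, y⟫ + ‖y‖ ^ 2 = 1 := by
    intro x y h
    have : ‖x - y‖ ^ 2 = 1 := by rw [← dist_eq_norm, h]; norm_num
    rw [norm_sub_sq_real] at this
    linarith
  have e11 := ex _ _ h11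
  have e12 := ex _ _ h12
  have e21 := ex _ _ h21
  have e22 := ex _ _ h22
  simp only [inner_sub_left, inner_sub_right]
  linarith

private lemma dim_aux (u₁ u₂ w₁ w₂ : EuclideanSpace ℝ (Fin 3))
    (hu : LinearIndependent ℝ ![u₁, u₂]) (hw : LinearIndependent ℝ ![w₁, w₂])
    (h11 : ⟪u₁, w₁⟫ = 0) (h12 : ⟪u₁, w₂⟫ = 0)
    (h21 : ⟪u₂, w₁⟫ = 0) (h22 : ⟪u₂, w₂⟫ = 0) : False := by
  set U : Submodule ℝ (EuclideanSpace ℝ (Fin 3)) := Submodule.span ℝ {u₁, u₂} with hU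
  have hrange : Set.range ![u₁, u₂] = {u₁, u₂} := by
    simp [Set.range_subset_iff]
    ext x
    simp [Fin.exists_fin_two]
    tauto
  have hUrank : Module.finrank ℝ U = 2 := by
    have := finrank_span_eq_card hu
    rw [hrange] at this
    simpa using this
  have hmem : ∀ w : EuclideanSpace ℝ (Fin 3), ⟪u₁, w⟫ = 0 → ⟪u₂, w⟫ = 0 → w ∈ Uᗮ := by
    intro w h1 h2
    rw [Submodule.mem_orthogonal]
    intro x hx
    induction hx using Submodule.span_induction with
    | mem y hy => rcases hy with rfl | rfl <;> assumption
    | zero => simp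
    | add y z _ _ hy hz => rw [inner_add_left, hy, hz]; ring
    | smul c y _ hy => rw [real_inner_smul_left, hy]; ring
  have hw1 : w₁ ∈ Uᗮ := hmem w₁ h11 h21
  have hw2 : w₂ ∈ Uᗮ := hmem w₂ h12 h22
  have hli : LinearIndependent ℝ (fun i : Fin 2 => (⟨![w₁, w₂] i,
      by fin_cases i <;> assumption⟩ : Uᗮ)) := by
    apply LinearIndependent.of_comp (Uᗮ).subtype
    exact hw
  have hcard := hli.fintype_card_le_finrank
  have htot : Module.finrank ℝ U + Module.finrank ℝ Uᗮ = 3 := by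
    rw [U.finrank_add_finrank_orthogonal]
    simp
  simp [Fintype.card_fin] at hcard
  omega

/-- The incidence graph between points and unit spheres in `ℝ³` contains no `K_{3,3}`:
there are no three distinct points and three distinct unit-sphere centers with every
point at distance `1` from every center. -/
theorem stmt11 (p₁ p₂ p₃ q₁ q₂ q₃ : EuclideanSpace ℝ (Fin 3))
    (hp12 : p₁ ≠ p₂) (hp13 : p₁ ≠ p₃) (hp23 : p₂ ≠ p₃)
    (hq12 : q₁ ≠ q₂) (hq13 : q₁ ≠ q₃) (hq23 : q₂ ≠ q₃) :
    ¬ (∀ p ∈ ({p₁, p₂, p₃} : Set (EuclideanSpace ℝ (Fin 3))),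
        ∀ q ∈ ({q₁, q₂, q₃} : Set (EuclideanSpace ℝ (Fin 3))), dist p q = 1) := by
  intro h
  have d11 := h p₁ (by simp) q₁ (by simp)
  have d12 := h p₁ (by simp) q₂ (by simp)
  have d13 := h p₁ (by simp) q₃ (by simp)
  have d21 := h p₂ (by simp) q₁ (by simp)
  have d22 := h p₂ (by simp) q₂ (by simp)
  have d23 := h p₂ (by simp) q₃ (by simp)
  have d31 := h p₃ (by simp) q₁ (by simp)
  have d32 := h p₃ (by simp) q₂ (by simp)
  have d33 := h p₃ (by simp) q₃ (by simp)
  have hu1 : p₂ - p₁ ≠ 0 := sub_ne_zero.2 (Ne.symm hp12)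
  have hw1 : q₂ - q₁ ≠ 0 := sub_ne_zero.2 (Ne.symm hq12)
  -- the "collinear" contradiction, applied to whichever triple is dependent
  have collinQ : ∀ c : ℝ, c • (q₂ - q₁) = q₃ - q₁ → False := by
    intro c hc
    have hc0 : c ≠ 0 := by
      rintro rfl; rw [zero_smul] at hc; exact hq13 (sub_eq_zero.1 hc.symm).symm
    have hc1 : c ≠ 1 := by
      rintro rfl; rw [one_smul] at hc; exact hq23 (sub_left_inj.1 hc)
    apply quad_aux (q₂ - q₁) (q₁ - p₁) hw1 0 1 c (by norm_num) (Ne.symm hc0) (Ne.symm hc1)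
    · have : q₁ - p₁ + (0:ℝ) • (q₂ - q₁) = q₁ - p₁ := by simp
      rw [this]
      have h2 : q₁ - p₁ + (1:ℝ) • (q₂ - q₁) = q₂ - p₁ := by rw [one_smul]; abel
      rw [h2, ← dist_eq_norm', ← dist_eq_norm', d11, d12]
    · have : q₁ - p₁ + (0:ℝ) • (q₂ - q₁) = q₁ - p₁ := by simp
      rw [this]
      have h2 : q₁ - p₁ + c • (q₂ - q₁) = q₃ - p₁ := by rw [hc]; abel
      rw [h2, ← dist_eq_norm', ← dist_eq_norm', d11, d13]
  have collinP : ∀ c : ℝ, c • (p₂ - p₁) = p₃ - p₁ → False := by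
    intro c hc
    have hc0 : c ≠ 0 := by
      rintro rfl; rw [zero_smul] at hc; exact hp13 (sub_eq_zero.1 hc.symm).symm
    have hc1 : c ≠ 1 := by
      rintro rfl; rw [one_smul] at hc; exact hp23 (sub_left_inj.1 hc)
    apply quad_aux (p₂ - p₁) (p₁ - q₁) hu1 0 1 c (by norm_num) (Ne.symm hc0) (Ne.symm hc1)
    · have : p₁ - q₁ + (0:ℝ) • (p₂ - p₁) = p₁ - q₁ := by simp
      rw [this]
      have h2 : p₁ - q₁ + (1:ℝ) • (p₂ - p₁) = p₂ - q₁ := by rw [one_smul]; abel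
      rw [h2, ← dist_eq_norm, ← dist_eq_norm, d11, d21]
    · have : p₁ - q₁ + (0:ℝ) • (p₂ - p₁) = p₁ - q₁ := by simp
      rw [this]
      have h2 : p₁ - q₁ + c • (p₂ - p₁) = p₃ - q₁ := by rw [hc]; abel
      rw [h2, ← dist_eq_norm, ← dist_eq_norm, d11, d31]
  by_cases hU : LinearIndependent ℝ ![p₂ - p₁, p₃ - p₁]
  · by_cases hW : LinearIndependent ℝ ![q₂ - q₁, q₃ - q₁]
    · exact dim_aux (p₂ - p₁) (p₃ - p₁) (q₂ - q₁) (q₃ - q₁) hU hW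
        (ortho_aux p₂ p₁ q₂ q₁ d22 d21 d12 d11)
        (ortho_aux p₂ p₁ q₃ q₁ d23 d21 d13 d11)
        (ortho_aux p₃ p₁ q₂ q₁ d32 d31 d12 d11)
        (ortho_aux p₃ p₁ q₃ q₁ d33 d31 d13 d11)
    · rw [LinearIndependent.pair_iff' hw1] at hW
      push_neg at hW
      obtain ⟨c, hc⟩ := hW
      exact collinQ c hc
  · rw [LinearIndependent.pair_iff' hu1] at hU
    push_neg at hU
    obtain ⟨c, hc⟩ := hU
    exact collinP c hc
end

section
/- Suppose an incidence-counting function satisfies the recursive scheme: J(m,n) ≤ a·D³·J(b₀m/D³, bn/D) + B·(m^{2s/(5s−4)}n^{(5s−6)/(5s−4)+ε} + m^{2/3}n^{2/3} + m + n) for fixed constants a, b₀, b, B, s ≥ 2, ε > 0 and any choice of D ≥ 1, together with the base bound J(m,n) ≤ B·n for m ≤ n^{1/s}. Then J(m,n) ≤ A·(m^{2s/(3s−1)}n^{(3s−3)/(3s−1)+ε} + m + n) for a suitable constant A (depending on a, b₀, b, B, s, ε), for all m, n with n^{1/s} ≤ m ≤ n³ and n sufficiently large. -/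
set_option maxHeartbeats 1000000

/-- Monomial comparison: for `n ≥ 1`, `m ≥ n^{1/t}`, increasing the `m`-exponent by `δ`
allows decreasing the `n`-exponent by anything at most `δ/t`. -/
lemma stmt14_mono (m n t p q p' q' : ℝ) (ht : 0 < t) (hn : 1 ≤ n)
    (hm : n ^ (1/t) ≤ m) (hp : p ≤ p') (hq : q ≤ q' + (p' - p)/t) :
    m ^ p * n ^ q ≤ m ^ p' * n ^ q' := by
  have hn0 : (0:ℝ) < n := lt_of_lt_of_le one_pos hn
  have hm1 : (1:ℝ) ≤ m := by
    have h0 : n ^ (0:ℝ) ≤ n ^ (1/t) :=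
      Real.rpow_le_rpow_of_exponent_le hn (by positivity)
    rw [Real.rpow_zero] at h0
    exact h0.trans hm
  have hm0 : (0:ℝ) < m := lt_of_lt_of_le one_pos hm1
  have key : n ^ (q - q') ≤ m ^ (p' - p) := by
    have h1 : n ^ (q - q') ≤ n ^ ((p' - p)/t) :=
      Real.rpow_le_rpow_of_exponent_le hn (by linarith)
    have h2 : n ^ ((p' - p)/t) = (n ^ (1/t)) ^ (p' - p) := by
      rw [← Real.rpow_mul hn0.le]
      ring_nf
    have h3 : (n ^ (1/t)) ^ (p' - p) ≤ m ^ (p' - p) :=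
      Real.rpow_le_rpow (by positivity) hm (by linarith)
    calc n ^ (q - q') ≤ n ^ ((p' - p)/t) := h1
      _ = (n ^ (1/t)) ^ (p' - p) := h2
      _ ≤ m ^ (p' - p) := h3
  calc m ^ p * n ^ q = m ^ p * (n ^ q' * n ^ (q - q')) := by
        rw [← Real.rpow_add hn0]; ring_nf
    _ ≤ m ^ p * (n ^ q' * m ^ (p' - p)) := by
        apply mul_le_mul_of_nonneg_left _ (by positivity)
        exact mul_le_mul_of_nonneg_left key (by positivity)
    _ = (m ^ p * m ^ (p' - p)) * n ^ q' := by ring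
    _ = m ^ p' * n ^ q' := by rw [← Real.rpow_add hm0]; ring_nf

/-- Closing the recursion of Theorem 1.12: if `J` satisfies the base bound
`J(m,n) ≤ B·n` for `m ≤ n^{1/s}` and the partitioning recursion
`J(m,n) ≤ a·D³·J(b₀m/D³, bn/D) + B(m^{2s/(5s−4)}n^{(5s−6)/(5s−4)+ε} + m^{2/3}n^{2/3} + m + n)`
for every `D ≥ 1`, then `J(m,n) ≤ A(m^{2s/(3s−1)}n^{(3s−3)/(3s−1)+ε} + m + n)` for a
suitable constant `A`, whenever `n^{1/s} ≤ m ≤ n³` and `n` is sufficiently large. -/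
theorem stmt14 (a b₀ b B ε : ℝ) (s : ℕ) (ha : 0 < a) (hb₀ : 0 < b₀) (hb : 0 < b)
    (hB : 0 < B) (hε : 0 < ε) (hs : 2 ≤ s) :
    ∃ A : ℝ, 0 < A ∧ ∃ N : ℝ, ∀ J : ℝ → ℝ → ℝ,
      (∀ m n : ℝ, 0 ≤ J m n) →
      (∀ m n : ℝ, 0 < m → 0 < n → m ≤ n ^ (1 / (s : ℝ)) → J m n ≤ B * n) →
      (∀ m n D : ℝ, 0 < m → 0 < n → 1 ≤ D →
        J m n ≤ a * D ^ 3 * J (b₀ * m / D ^ 3) (b * n / D) +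
          B * (m ^ (2 * (s : ℝ) / (5 * (s : ℝ) - 4)) *
                n ^ ((5 * (s : ℝ) - 6) / (5 * (s : ℝ) - 4) + ε) +
              m ^ ((2 : ℝ) / 3) * n ^ ((2 : ℝ) / 3) + m + n)) →
      ∀ m n : ℝ, N ≤ n → n ^ (1 / (s : ℝ)) ≤ m → m ≤ n ^ (3 : ℝ) →
        J m n ≤ A * (m ^ (2 * (s : ℝ) / (3 * (s : ℝ) - 1)) *
            n ^ ((3 * (s : ℝ) - 3) / (3 * (s : ℝ) - 1) + ε) + m + n) := by
  set t : ℝ := (s : ℝ) with htdef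
  have ht2 : (2:ℝ) ≤ t := by rw [htdef]; exact_mod_cast hs
  have ht0 : (0:ℝ) < t := by linarith
  have h31 : (0:ℝ) < 3*t - 1 := by linarith
  have h54 : (0:ℝ) < 5*t - 4 := by linarith
  set σ : ℝ := t / (3*t - 1) with hσdef
  have hσ0 : 0 < σ := by positivity
  set C₀ : ℝ := b₀ ^ (2*σ) * b ^ (-(2*σ)/t) with hC₀def
  have hC₀ : 0 < C₀ := by positivity
  refine ⟨a*b*B*(1+C₀) + 2*B, by positivity, 1, ?_⟩
  intro J hJ0 hbase hrec m n hn1 hmlow hmhigh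
  have hn0 : (0:ℝ) < n := by linarith
  have hm1 : (1:ℝ) ≤ m := by
    have h0 : n ^ (0:ℝ) ≤ n ^ (1/t) :=
      Real.rpow_le_rpow_of_exponent_le hn1 (by positivity)
    rw [Real.rpow_zero] at h0
    exact h0.trans hmlow
  have hm0 : (0:ℝ) < m := lt_of_lt_of_le one_pos hm1
  have hbn : (0:ℝ) < b*n := by positivity
  set x : ℝ := b₀ * m * (b*n) ^ (-(1/t)) with hxdef
  have hx : 0 < x := by positivity
  set D₀ : ℝ := x ^ σ with hD₀def
  have hD₀ : 0 < D₀ := by positivity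
  set D : ℝ := max 1 D₀ with hDdef
  have hD1 : (1:ℝ) ≤ D := le_max_left _ _
  have hD0 : (0:ℝ) < D := lt_of_lt_of_le one_pos hD1
  -- key: the small-cell point count falls below the base threshold
  have hxD : x ≤ D ^ (3:ℕ) * D ^ (-(1/t)) := by
    have e1 : x = D₀ ^ ((3*t-1)/t) := by
      rw [hD₀def, ← Real.rpow_mul hx.le]
      have : σ * ((3*t-1)/t) = 1 := by
        have h' : t*3-1 ≠ 0 := ne_of_gt (by linarith)
        rw [hσdef]; field_simp
      rw [this, Real.rpow_one]
    have e2 : D₀ ^ ((3*t-1)/t) ≤ D ^ ((3*t-1)/t) :=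
      Real.rpow_le_rpow hD₀.le (le_max_right _ _) (by positivity)
    have e3 : D ^ ((3*t-1)/t) = D ^ (3:ℕ) * D ^ (-(1/t)) := by
      rw [← Real.rpow_natCast D 3, ← Real.rpow_add hD0]
      congr 1
      push_cast
      field_simp
      ring
    rw [e1]; rw [e3] at e2; exact e2
  have hsmall : b₀ * m / D ^ 3 ≤ (b*n/D) ^ (1/t) := by
    have h1 : b₀ * m = x * (b*n) ^ (1/t) := by
      rw [hxdef, mul_assoc, ← Real.rpow_add hbn]
      norm_num
    rw [Real.div_rpow hbn.le hD0.le, h1,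
      div_le_div_iff₀ (by positivity) (by positivity)]
    have h2 : x * (b*n) ^ (1/t) * D ^ (1/t)
        ≤ (D ^ (3:ℕ) * D ^ (-(1/t))) * (b*n) ^ (1/t) * D ^ (1/t) := by
      have hc : (0:ℝ) ≤ (b*n) ^ (1/t) * D ^ (1/t) := by positivity
      nlinarith [mul_le_mul_of_nonneg_right hxD hc]
    have h3 : D ^ (-(1/t)) * D ^ (1/t) = 1 := by
      rw [← Real.rpow_add hD0]; norm_num
    calc x * (b*n) ^ (1/t) * D ^ (1/t)
        ≤ (D ^ (3:ℕ) * D ^ (-(1/t))) * (b*n) ^ (1/t) * D ^ (1/t) := h2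
      _ = (b*n) ^ (1/t) * D ^ 3 * (D ^ (-(1/t)) * D ^ (1/t)) := by ring
      _ = (b*n) ^ (1/t) * D ^ 3 := by rw [h3, mul_one]
  have hJsmall : J (b₀ * m / D ^ 3) (b*n/D) ≤ B * (b*n/D) :=
    hbase _ _ (by positivity) (by positivity) hsmall
  -- abbreviations for the monomials
  set M : ℝ := m ^ (2 * t / (3*t - 1)) * n ^ ((3*t - 3) / (3*t - 1) + ε) with hMdef
  have hM0 : 0 ≤ M := by positivity
  -- boundary term 1 is at most M
  have hT1 : m ^ (2 * t / (5*t - 4)) * n ^ ((5*t - 6) / (5*t - 4) + ε) ≤ M := by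
    apply stmt14_mono m n t _ _ _ _ ht0 hn1 hmlow
    · rw [div_le_div_iff₀ h54 h31]; nlinarith
    · have key : (3*t-3)/(3*t-1) + (2*t/(3*t-1) - 2*t/(5*t-4))/t
          = (5*t-6)/(5*t-4) := by
        have h' : t*5-4 ≠ 0 := ne_of_gt (by linarith)
        field_simp
        ring
      linarith
  -- boundary term 2 is at most M
  have hT2 : m ^ ((2:ℝ)/3) * n ^ ((2:ℝ)/3) ≤ M := by
    apply stmt14_mono m n t _ _ _ _ ht0 hn1 hmlow
    · rw [div_le_div_iff₀ (by norm_num : (0:ℝ) < 3) h31]; nlinarith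
    · have key : (3*t-3)/(3*t-1) + (2*t/(3*t-1) - 2/3)/t - 2/3
          = (t-2)/(3*t) := by
        field_simp
        ring
      have hge : (0:ℝ) ≤ (t-2)/(3*t) := by
        apply div_nonneg <;> linarith
      linarith
  -- the cell term: n * D₀² = C₀ * (M without the ε)
  have hcell : n * D₀ ^ 2 ≤ C₀ * M := by
    have e1 : D₀ ^ 2 = x ^ (2*σ) := by
      rw [hD₀def, ← Real.rpow_natCast (x ^ σ) 2, ← Real.rpow_mul hx.le]
      norm_num [mul_comm]
    have e2 : x ^ (2*σ) = b₀ ^ (2*σ) * m ^ (2*σ) * (b*n) ^ (-(1/t)*(2*σ)) := by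
      rw [hxdef, Real.mul_rpow (by positivity) (by positivity),
        Real.mul_rpow hb₀.le hm0.le, ← Real.rpow_mul hbn.le]
    have e3 : (b*n) ^ (-(1/t)*(2*σ)) = b ^ (-(2*σ)/t) * n ^ (-(2*σ)/t) := by
      rw [Real.mul_rpow hb.le hn0.le]
      congr 2 <;> · field_simp
    have e4 : n * n ^ (-(2*σ)/t) = n ^ ((3*t-3)/(3*t-1)) := by
      nth_rewrite 1 [← Real.rpow_one n]
      rw [← Real.rpow_add hn0]
      congr 1
      rw [hσdef]
      have h' : t*3-1 ≠ 0 := ne_of_gt (by linarith)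
      field_simp
      ring
    have e5 : m ^ (2*σ) = m ^ (2*t/(3*t-1)) := by
      congr 1
      rw [hσdef]; ring
    have e6 : n ^ ((3*t-3)/(3*t-1)) ≤ n ^ ((3*t-3)/(3*t-1) + ε) :=
      Real.rpow_le_rpow_of_exponent_le hn1 (by linarith)
    calc n * D₀ ^ 2
        = C₀ * (m ^ (2*t/(3*t-1)) * (n * n ^ (-(2*σ)/t))) := by
          rw [e1, e2, e3, hC₀def, e5]; ring
      _ = C₀ * (m ^ (2*t/(3*t-1)) * n ^ ((3*t-3)/(3*t-1))) := by rw [e4]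
      _ ≤ C₀ * (m ^ (2*t/(3*t-1)) * n ^ ((3*t-3)/(3*t-1) + ε)) := by
          apply mul_le_mul_of_nonneg_left _ hC₀.le
          exact mul_le_mul_of_nonneg_left e6 (by positivity)
      _ = C₀ * M := by rw [hMdef]
  have hD2 : D ^ 2 ≤ 1 + D₀ ^ 2 := by
    rcases max_cases 1 D₀ with ⟨h1, h2⟩ | ⟨h1, h2⟩ <;> rw [hDdef, h1] <;> nlinarith
  -- put it together
  have hmain := hrec m n D hm0 hn0 hD1
  have hstep : a * D ^ 3 * J (b₀ * m / D ^ 3) (b*n/D) ≤ a*b*B*(n + C₀*M) := by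
    calc a * D ^ 3 * J (b₀ * m / D ^ 3) (b*n/D)
        ≤ a * D ^ 3 * (B * (b*n/D)) :=
          mul_le_mul_of_nonneg_left hJsmall (by positivity)
      _ = a*b*B*(n * D ^ 2) := by field_simp
      _ ≤ a*b*B*(n * (1 + D₀ ^ 2)) := by
          apply mul_le_mul_of_nonneg_left _ (by positivity)
          exact mul_le_mul_of_nonneg_left hD2 hn0.le
      _ = a*b*B*(n + n * D₀ ^ 2) := by ring
      _ ≤ a*b*B*(n + C₀*M) := by
          apply mul_le_mul_of_nonneg_left _ (by positivity)
          linarith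
  calc J m n ≤ a * D ^ 3 * J (b₀ * m / D ^ 3) (b*n/D) +
        B * (m ^ (2 * t / (5*t - 4)) * n ^ ((5*t - 6) / (5*t - 4) + ε) +
          m ^ ((2:ℝ)/3) * n ^ ((2:ℝ)/3) + m + n) := hmain
    _ ≤ a*b*B*(n + C₀*M) + B * (M + M + m + n) := by
        have : m ^ (2 * t / (5*t - 4)) * n ^ ((5*t - 6) / (5*t - 4) + ε) +
            m ^ ((2:ℝ)/3) * n ^ ((2:ℝ)/3) + m + n ≤ M + M + m + n := by linarith
        have h' := mul_le_mul_of_nonneg_left this hB.le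
        linarith
    _ ≤ (a*b*B*(1+C₀) + 2*B) * (M + m + n) := by
        have habB : (0:ℝ) < a*b*B := by positivity
        have k1 : 0 ≤ a*b*B*M := by positivity
        have k2 : 0 ≤ a*b*B*(C₀*m) := by positivity
        have k3 : 0 ≤ a*b*B*m := by positivity
        have k4 : 0 ≤ a*b*B*(C₀*n) := by positivity
        nlinarith [k1, k2, k3, k4]
end
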